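/- For every integer n ≥ 7, the strong prism over the cycle satisfies μ(C_n ⊠ P_2) = n. -/

import Mathlib

open SimpleGraph

/-- Vertices `x` and `y` are `X`-visible in `G`: some shortest `x,y`-path has
no internal vertex in `X`. -/
def Visible {V : Type*} (G : SimpleGraph V) (X : Set V) (x y : V) : Prop :=
  ∃ p : G.Walk x y, p.length = G.dist x y ∧ ∀ v ∈ p.support, v ∈ X → v = x ∨ v = y

/-- `X` is a mutual-visibility set of `G`: every two vertices of `X` are `X`-visible. -/
def IsMVSet {V : Type*} (G : SimpleGraph V) (X : Set V) : Prop :=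
  ∀ x ∈ X, ∀ y ∈ X, Visible G X x y

/-- `X` is a total mutual-visibility set of `G`: every two vertices of `G` are
`X`-visible. -/
def IsTMVSet {V : Type*} (G : SimpleGraph V) (X : Set V) : Prop :=
  ∀ x y : V, Visible G X x y

/-- The mutual-visibility number of `G`: the maximum cardinality of a
mutual-visibility set. -/
noncomputable def mu {V : Type*} (G : SimpleGraph V) : ℕ :=
  sSup {n | ∃ X : Set V, IsMVSet G X ∧ X.ncard = n}

/-- The total mutual-visibility number of `G`: the maximum cardinality of a total
mutual-visibility set. -/
noncomputable def muT {V : Type*} (G : SimpleGraph V) : ℕ :=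
  sSup {n | ∃ X : Set V, IsTMVSet G X ∧ X.ncard = n}

/-- A feasible total mutual-visibility set: a total mutual-visibility set `S` such that
any two adjacent vertices of `S` have a common neighbor outside `S`. -/
def IsFeasibleTMVSet {V : Type*} (G : SimpleGraph V) (S : Set V) : Prop :=
  IsTMVSet G S ∧ ∀ x ∈ S, ∀ y ∈ S, G.Adj x y → ∃ z ∉ S, G.Adj x z ∧ G.Adj y z

/-- The strong product of two simple graphs. -/
def strongProd {α β : Type*} (G : SimpleGraph α) (H : SimpleGraph β) :
    SimpleGraph (α × β) where
  Adj x y := (G.Adj x.1 y.1 ∧ x.2 = y.2) ∨ (x.1 = y.1 ∧ H.Adj x.2 y.2) ∨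
    (G.Adj x.1 y.1 ∧ H.Adj x.2 y.2)
  symm := by
    constructor
    rintro ⟨a, b⟩ ⟨c, d⟩ (⟨h1, h2⟩ | ⟨h1, h2⟩ | ⟨h1, h2⟩)
    · exact Or.inl ⟨h1.symm, h2.symm⟩
    · exact Or.inr (Or.inl ⟨h1.symm, h2.symm⟩)
    · exact Or.inr (Or.inr ⟨h1.symm, h2.symm⟩)
  loopless := by
    constructor
    rintro ⟨a, b⟩ (⟨h, _⟩ | ⟨_, h⟩ | ⟨h, _⟩)
    · exact G.ne_of_adj h rfl
    · exact H.ne_of_adj h rfl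
    · exact G.ne_of_adj h rfl

/-- The iterated (associative) strong product of a finite family of graphs:
two tuples are adjacent iff they are distinct and agree or are adjacent in every
coordinate. -/
def strongProdPi {k : ℕ} {V : Fin k → Type*} (G : ∀ i, SimpleGraph (V i)) :
    SimpleGraph (∀ i, V i) where
  Adj x y := x ≠ y ∧ ∀ i, x i = y i ∨ (G i).Adj (x i) (y i)
  symm := by
    constructor
    rintro x y ⟨hne, h⟩
    exact ⟨hne.symm, fun i => (h i).imp Eq.symm fun hh => hh.symm⟩
  loopless := ⟨fun x h => h.1 rfl⟩

/-- A universal vertex: adjacent to all other vertices. -/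
def IsUniversal {V : Type*} (G : SimpleGraph V) (v : V) : Prop :=
  ∀ u : V, u ≠ v → G.Adj v u

/-- A cut vertex: its removal disconnects the graph. -/
def IsCutVertex {V : Type*} (G : SimpleGraph V) (v : V) : Prop :=
  ¬ (G.induce ({v}ᶜ : Set V)).Preconnected

/-- An induced path: a path with no chords between its vertices. -/
def IsInducedPath {V : Type*} (G : SimpleGraph V) {u v : V} (p : G.Walk u v) : Prop :=
  p.IsPath ∧ ∀ a b : V, a ∈ p.support → b ∈ p.support → G.Adj a b → s(a, b) ∈ p.edges

/-- A block graph: a connected graph in which every pair of vertices is joined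
by a unique induced path. -/
def IsBlockGraph {V : Type*} (G : SimpleGraph V) : Prop :=
  G.Connected ∧ ∀ u v : V, ∃! p : G.Walk u v, IsInducedPath G p

/-- A convex set of vertices: every shortest path of `G` between two of its
vertices stays inside the set. -/
def IsConvexSet {V : Type*} (G : SimpleGraph V) (A : Set V) : Prop :=
  ∀ x ∈ A, ∀ y ∈ A, ∀ p : G.Walk x y, p.length = G.dist x y → ∀ v ∈ p.support, v ∈ A

/-- A cactus graph: a connected graph in which every edge lies in at most one cycle,
i.e. two cycles sharing an edge have the same edge set. -/
def IsCactus {V : Type*} (G : SimpleGraph V) : Prop :=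
  G.Connected ∧ ∀ (v : V) (p q : G.Walk v v), p.IsCycle → q.IsCycle →
    ∀ e, e ∈ p.edges → e ∈ q.edges → ∀ e', e' ∈ p.edges ↔ e' ∈ q.edges

/-- A cograph: obtained from a single vertex by repeatedly adding twins, i.e. there is
an enumeration of the vertices in which every vertex except the first is, at the
moment of its addition, a (true or false) twin of some earlier vertex in the induced
subgraph on the vertices added so far. -/
def IsCograph {V : Type*} (G : SimpleGraph V) : Prop :=
  ∃ l : List V, l.Nodup ∧ (∀ v : V, v ∈ l) ∧
    ∀ i : Fin l.length, (i : ℕ) ≠ 0 →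
      ∃ j : Fin l.length, (j : ℕ) < (i : ℕ) ∧
        ∀ z ∈ l.take ((i : ℕ) + 1), z ≠ l.get i → z ≠ l.get j →
          (G.Adj (l.get i) z ↔ G.Adj (l.get j) z)

/-- An enabling vertex: a vertex `v` adjacent to every vertex `u` of `G - v` whose
degree in `G - v` is less than `n(G) - 2`. -/
def IsEnabling {V : Type*} [Fintype V] (G : SimpleGraph V) (v : V) : Prop :=
  ∀ u : V, u ≠ v → (G.neighborSet u \ {v}).ncard < Fintype.card V - 2 → G.Adj v u

namespace MVAux

open scoped Fin.NatCast Fin.IntCast Fin.CommRing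

set_option linter.unusedSectionVars false

variable {n : ℕ} [NeZero n]

abbrev GG (n : ℕ) : SimpleGraph (Fin n × Fin 2) :=
  strongProd (SimpleGraph.cycleGraph n) (SimpleGraph.pathGraph 2)

lemma p2_adj {i j : Fin 2} (h : i ≠ j) : (pathGraph 2).Adj i j := by
  have hi := i.isLt; have hj := j.isLt
  rw [pathGraph_adj]
  rw [Ne, Fin.ext_iff] at h
  omega

lemma adj_G {a b : Fin n} (i j : Fin 2) (h : (cycleGraph n).Adj a b) :
    (GG n).Adj (a, i) (b, j) := by
  by_cases hij : i = j
  · exact Or.inl ⟨h, hij⟩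
  · exact Or.inr (Or.inr ⟨h, p2_adj hij⟩)

lemma adj_G_fst {x y : Fin n × Fin 2} (h : (GG n).Adj x y) :
    (cycleGraph n).Adj x.1 y.1 ∨ x.1 = y.1 := by
  rcases h with ⟨h, -⟩ | ⟨h, -⟩ | ⟨h, -⟩
  · exact Or.inl h
  · exact Or.inr h
  · exact Or.inl h

/-- canonical map `Fin n → ZMod n` -/
def cm (a : Fin n) : ZMod n := (a.val : ZMod n)

lemma cm_add (a b : Fin n) : cm (a + b) = cm a + cm b := by
  unfold cm
  rw [Fin.val_add, ZMod.natCast_mod, Nat.cast_add]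

lemma cm_natCast (k : ℕ) : cm ((k : Fin n)) = (k : ZMod n) := by
  unfold cm
  rw [Fin.val_natCast, ZMod.natCast_mod]

lemma cm_inj {a b : Fin n} (h : cm a = cm b) : a = b := by
  have h' := congrArg ZMod.val h
  rwa [cm, cm, ZMod.val_natCast_of_lt a.isLt, ZMod.val_natCast_of_lt b.isLt,
    ← Fin.ext_iff] at h'

lemma cm_sub (a b : Fin n) : cm (a - b) = cm a - cm b := by
  have h : cm (a - b) + cm b = cm a := by rw [← cm_add, sub_add_cancel]
  linear_combination h

lemma cm_adj {a b : Fin n} (h : (cycleGraph n).Adj a b) :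
    cm b = cm a + 1 ∨ cm b = cm a - 1 := by
  rw [cycleGraph_adj'] at h
  rcases h with h | h
  · right
    have : cm (a - b) = 1 := by rw [cm, h, Nat.cast_one]
    rw [cm_sub] at this
    linear_combination -this
  · left
    have : cm (b - a) = 1 := by rw [cm, h, Nat.cast_one]
    rw [cm_sub] at this
    linear_combination this

lemma adj_succ (hn : 7 ≤ n) (a : Fin n) : (cycleGraph n).Adj a (a + 1) := by
  rw [cycleGraph_adj']
  right
  rw [add_sub_cancel_left, Fin.val_one']
  exact Nat.mod_eq_of_lt (by omega)

lemma cast_nat_inj {a b : ℕ} (ha : a < n) (hb : b < n) (h : (a : ZMod n) = (b : ZMod n)) :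
    a = b := by
  have h' := congrArg ZMod.val h
  rwa [ZMod.val_natCast_of_lt ha, ZMod.val_natCast_of_lt hb] at h'

lemma not_cast_eq {S : ℤ} {t : ℕ} (h : (S : ZMod n) = (t : ZMod n))
    (h1 : S.natAbs < t) (h2 : S.natAbs + t < n) : False := by
  have h0 : ((S - (t : ℤ) : ℤ) : ZMod n) = 0 := by
    push_cast
    rw [h]
    ring
  obtain ⟨m, hm⟩ := (ZMod.intCast_zmod_eq_zero_iff_dvd _ n).mp h0
  rcases lt_trichotomy m 0 with hc | hc | hc
  · have h3 : m ≤ -1 := by omega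
    have h4 : (n : ℤ) * m ≤ (n : ℤ) * (-1) :=
      mul_le_mul_of_nonneg_left h3 (by positivity)
    set P := (n : ℤ) * m with hP
    omega
  · subst hc
    simp only [mul_zero] at hm
    omega
  · have h3 : (1 : ℤ) ≤ m := by omega
    have h4 : (n : ℤ) * 1 ≤ (n : ℤ) * m :=
      mul_le_mul_of_nonneg_left h3 (by positivity)
    set P := (n : ℤ) * m with hP
    omega

lemma walk_bound {x y : Fin n × Fin 2} (p : (GG n).Walk x y) :
    ∃ S : ℤ, S.natAbs ≤ p.length ∧ cm y.1 = cm x.1 + (S : ZMod n) := by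
  induction p with
  | nil => exact ⟨0, by simp⟩
  | @cons a b c h q ih =>
    obtain ⟨S, hS, hEq⟩ := ih
    rcases adj_G_fst h with hadj | heq
    · rcases cm_adj hadj with h1 | h1
      · refine ⟨S + 1, ?_, ?_⟩
        · calc (S + 1).natAbs ≤ S.natAbs + 1 := Int.natAbs_add_le S 1
            _ ≤ q.length + 1 := by omega
            _ = (Walk.cons h q).length := by rw [Walk.length_cons]
        · rw [hEq, h1]; push_cast; ring
      · have habs : (S - 1).natAbs ≤ S.natAbs + 1 := by
          have := Int.natAbs_sub_le S 1
          simpa using this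
        refine ⟨S - 1, ?_, ?_⟩
        · rw [Walk.length_cons]; omega
        · rw [hEq, h1]; push_cast; ring
    · refine ⟨S, by rw [Walk.length_cons]; omega, ?_⟩
      rw [heq]; exact hEq

lemma walk_force (d : ℕ) :
    ∀ {x y : Fin n × Fin 2} (p : (GG n).Walk x y), p.length = d →
    cm y.1 = cm x.1 + (d : ZMod n) → 2 * d < n →
    ∀ t, t ≤ d → ∃ v ∈ p.support, cm v.1 = cm x.1 + (t : ZMod n) := by
  induction d with
  | zero =>
    intro x y p hp hy _ t ht
    have ht0 : t = 0 := by omega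
    subst ht0
    exact ⟨x, p.start_mem_support, by simp⟩
  | succ d ih =>
    intro x y p hp hy hd t ht
    cases p with
    | nil => simp at hp
    | @cons _ u _ h q =>
      have hq : q.length = d := by
        rw [Walk.length_cons] at hp; omega
      rcases adj_G_fst h with hadj | heq
      · rcases cm_adj hadj with h1 | h1
        · -- step +1
          have hy' : cm y.1 = cm u.1 + (d : ZMod n) := by
            rw [hy, h1]; push_cast; ring
          rcases Nat.eq_zero_or_pos t with ht0 | htpos
          · subst ht0
            exact ⟨x, Walk.start_mem_support _, by simp⟩
          · obtain ⟨s, hs⟩ : ∃ s, t = s + 1 := ⟨t - 1, by omega⟩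
            subst hs
            obtain ⟨v, hv, hcm⟩ := ih q hq hy' (by omega) s (by omega)
            refine ⟨v, by rw [Walk.support_cons]; exact List.mem_cons_of_mem _ hv, ?_⟩
            rw [hcm, h1]; push_cast; ring
        · -- step -1 : impossible
          exfalso
          obtain ⟨S, hS, hEq⟩ := walk_bound q
          have hcast : (S : ZMod n) = ((d + 2 : ℕ) : ZMod n) := by
            have e1 : cm u.1 + (S : ZMod n) = cm u.1 + ((d + 2 : ℕ) : ZMod n) := by
              rw [← hEq, hy, h1]; push_cast; ring
            exact add_left_cancel e1
          exact not_cast_eq hcast (by omega) (by omega)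
      · -- stay : impossible
        exfalso
        obtain ⟨S, hS, hEq⟩ := walk_bound q
        have hcast : (S : ZMod n) = ((d + 1 : ℕ) : ZMod n) := by
          have e1 : cm u.1 + (S : ZMod n) = cm u.1 + ((d + 1 : ℕ) : ZMod n) := by
            rw [← hEq, hy, heq]
          exact add_left_cancel e1
        exact not_cast_eq hcast (by omega) (by omega)

lemma rowWalk (hn : 7 ≤ n) (r : Fin 2) (m : ℕ) :
    ∀ a : Fin n, ∃ p : (GG n).Walk (a, r) (a + (m : Fin n), r),
      p.length = m ∧ ∀ v ∈ p.support, v.2 = r := by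
  induction m with
  | zero =>
    intro a
    refine ⟨Walk.nil.copy rfl (by simp), ?_, ?_⟩
    · simp
    · intro v hv
      rw [Walk.support_copy] at hv
      simp at hv
      rw [hv]
  | succ m ih =>
    intro a
    obtain ⟨p, hl, hs⟩ := ih (a + 1)
    have hadj : (GG n).Adj (a, r) (a + 1, r) := adj_G r r (adj_succ hn a)
    have hend : (a + 1 + (m : Fin n), r) = (a + ((m + 1 : ℕ) : Fin n), r) := by
      have : a + 1 + (m : Fin n) = a + ((m + 1 : ℕ) : Fin n) := by push_cast; ring
      rw [this]
    refine ⟨((Walk.cons hadj p).copy rfl hend), ?_, ?_⟩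
    · rw [Walk.length_copy, Walk.length_cons, hl]
    · intro v hv
      rw [Walk.support_copy, Walk.support_cons] at hv
      rcases List.mem_cons.mp hv with h | h
      · rw [h]
      · exact hs v h

lemma exists_walk_off (hn : 7 ≤ n) (x y : Fin n × Fin 2) (k : ℕ) (hk : 1 ≤ k)
    (hxy : y.1 = x.1 + (k : Fin n)) :
    ∃ q : (GG n).Walk x y, q.length = k := by
  obtain ⟨p, hl, -⟩ := rowWalk hn y.2 (k - 1) (x.1 + 1)
  have hadj : (GG n).Adj x (x.1 + 1, y.2) := by
    have := adj_G x.2 y.2 (adj_succ hn x.1)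
    simpa using this
  have hend : (x.1 + 1 + ((k - 1 : ℕ) : Fin n), y.2) = y := by
    have h1 : x.1 + 1 + ((k - 1 : ℕ) : Fin n) = y.1 := by
      rw [hxy]
      have : ((k - 1 : ℕ) : Fin n) = (k : Fin n) - 1 := by
        have : (k - 1) + 1 = k := by omega
        calc ((k - 1 : ℕ) : Fin n) = (((k - 1) + 1 : ℕ) : Fin n) - 1 := by push_cast; ring
          _ = (k : Fin n) - 1 := by rw [this]
      rw [this]; ring
    rw [h1]
  refine ⟨(Walk.cons hadj p).copy rfl hend, ?_⟩
  rw [Walk.length_copy, Walk.length_cons, hl]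
  omega

lemma walk_length_ge {x y : Fin n × Fin 2} (k : ℕ) (hkn : k < n)
    (hcm : cm y.1 = cm x.1 + (k : ZMod n)) (hk2 : 2 * k ≤ n)
    (p : (GG n).Walk x y) : k ≤ p.length := by
  by_contra hlt
  push_neg at hlt
  obtain ⟨S, hS, hEq⟩ := walk_bound p
  have hcast : (S : ZMod n) = ((k : ℕ) : ZMod n) := by
    have e1 : cm x.1 + (S : ZMod n) = cm x.1 + ((k : ℕ) : ZMod n) := by
      rw [← hEq, hcm]
    exact add_left_cancel e1
  exact not_cast_eq hcast (by omega) (by omega)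

lemma dist_eq_off (hn : 7 ≤ n) (x y : Fin n × Fin 2) (k : ℕ) (hk : 1 ≤ k)
    (h2 : 2 * k ≤ n) (hxy : y.1 = x.1 + (k : Fin n)) : (GG n).dist x y = k := by
  obtain ⟨q, hq⟩ := exists_walk_off hn x y k hk hxy
  have hcm : cm y.1 = cm x.1 + (k : ZMod n) := by
    rw [hxy, cm_add, cm_natCast]
  refine le_antisymm (hq ▸ SimpleGraph.dist_le q) ?_
  obtain ⟨w, hw⟩ := SimpleGraph.Reachable.exists_walk_length_eq_dist ⟨q⟩
  rw [← hw]
  exact walk_length_ge k (by omega) hcm h2 w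

lemma sub_val_add {a b : Fin n} (h : a ≠ b) : (b - a).val + (a - b).val = n := by
  have h1 : ((b - a) + (a - b)).val = ((b - a).val + (a - b).val) % n := Fin.val_add _ _
  have h2 : (b - a) + (a - b) = 0 := by ring
  rw [h2] at h1
  have h3 : (0 : Fin n).val = 0 := Fin.val_zero n
  have h4 : ((b - a).val + (a - b).val) % n = 0 := by omega
  obtain ⟨m, hm⟩ := Nat.dvd_of_mod_eq_zero h4
  have hba : b - a ≠ 0 := sub_ne_zero.mpr (Ne.symm h)
  have hba' : (b - a).val ≠ 0 := fun hc => hba (Fin.ext (by rw [hc, h3]))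
  have l1 := (b - a).isLt
  have l2 := (a - b).isLt
  match m, hm with
  | 0, hm => omega
  | 1, hm => omega
  | (m + 2), hm =>
    exfalso
    have : n * (m + 2) = n * m + n + n := by ring
    rw [this] at hm
    have : 0 ≤ n * m := Nat.zero_le _
    omega

lemma visible_symm {V : Type*} {G : SimpleGraph V} {X : Set V} {x y : V}
    (h : Visible G X x y) : Visible G X y x := by
  obtain ⟨p, hl, hs⟩ := h
  refine ⟨p.reverse, ?_, ?_⟩
  · rw [Walk.length_reverse, hl, SimpleGraph.dist_comm]
  · intro v hv hvX
    rw [Walk.support_reverse, List.mem_reverse] at hv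
    exact (hs v hv hvX).symm

lemma visible_pair (hn : 7 ≤ n) {a b : Fin n} (k : ℕ) (hk2 : 2 ≤ k) (h2 : 2 * k ≤ n)
    (hb : b = a + (k : Fin n)) :
    Visible (GG n) {v : Fin n × Fin 2 | v.2 = 0} (a, 0) (b, 0) := by
  obtain ⟨p, hlen, hsup⟩ := rowWalk hn 1 (k - 2) (a + 1)
  have h1 : (GG n).Adj (a, (0 : Fin 2)) (a + 1, (1 : Fin 2)) := adj_G _ _ (adj_succ hn a)
  have hmid : a + 1 + ((k - 2 : ℕ) : Fin n) = a + ((k - 1 : ℕ) : Fin n) := by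
    have e : ((k - 2) + 1 : ℕ) = k - 1 := by omega
    calc a + 1 + ((k - 2 : ℕ) : Fin n) = a + (((k - 2) + 1 : ℕ) : Fin n) := by push_cast; ring
      _ = a + ((k - 1 : ℕ) : Fin n) := by rw [e]
  have hstep : b = a + ((k - 1 : ℕ) : Fin n) + 1 := by
    have e : ((k - 1) + 1 : ℕ) = k := by omega
    calc b = a + (((k - 1) + 1 : ℕ) : Fin n) := by rw [hb, e]
      _ = a + ((k - 1 : ℕ) : Fin n) + 1 := by push_cast; ring
  have h3 : (GG n).Adj (a + 1 + ((k - 2 : ℕ) : Fin n), (1 : Fin 2)) (b, (0 : Fin 2)) := by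
    rw [hmid, hstep]
    exact adj_G _ _ (adj_succ hn _)
  set q : (GG n).Walk (a, (0 : Fin 2)) (b, (0 : Fin 2)) := Walk.cons h1 (p.concat h3) with hq
  have hqlen : q.length = k := by
    rw [hq, Walk.length_cons, Walk.length_concat, hlen]
    omega
  have hcm : cm ((b, (0 : Fin 2)) : Fin n × Fin 2).1 = cm ((a, (0 : Fin 2)) : Fin n × Fin 2).1 + (k : ZMod n) := by
    simp only
    rw [hb, cm_add, cm_natCast]
  refine ⟨q, ?_, ?_⟩
  · rw [hqlen, dist_eq_off hn (a, 0) (b, 0) k (by omega) h2 (by simpa using hb)]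
  · intro v hv hvX
    rw [hq, Walk.support_cons] at hv
    rcases List.mem_cons.mp hv with h | h
    · exact Or.inl h
    · rw [Walk.support_concat] at h
      rcases List.mem_append.mp h with h | h
      · exfalso
        have := hsup v h
        have hv0 : v.2 = 0 := hvX
        rw [this] at hv0
        exact (by decide : (1 : Fin 2) ≠ 0) hv0
      · exact Or.inr (List.mem_singleton.mp h)

lemma key_vis (hn : 7 ≤ n) (x y : Fin n × Fin 2) (hx : x.2 = 0) (hy : y.2 = 0)
    (h : 2 * (y.1 - x.1).val ≤ n) :
    Visible (GG n) {v : Fin n × Fin 2 | v.2 = 0} x y := by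
  set k := (y.1 - x.1).val with hk
  have hxy : y.1 = x.1 + (k : Fin n) := by
    rw [hk, Fin.cast_val_eq_self]
    ring
  have hx' : x = (x.1, (0 : Fin 2)) := by
    rw [← hx]
  have hy' : y = (y.1, (0 : Fin 2)) := by
    rw [← hy]
  rcases Nat.lt_or_ge k 2 with hlt | hge
  · interval_cases k
    · -- k = 0 : x = y
      have h0 : y.1 - x.1 = 0 := by
        apply Fin.ext
        rw [Fin.val_zero]
        omega
      have hxy1 : x.1 = y.1 := (sub_eq_zero.mp h0).symm
      have hxyeq : x = y := by
        rw [hx', hy', hxy1]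
      subst hxyeq
      refine ⟨Walk.nil, by simp [SimpleGraph.dist_self], ?_⟩
      intro v hv _
      simp at hv
      exact Or.inl hv
    · -- k = 1 : adjacent
      have hadj : (cycleGraph n).Adj x.1 y.1 := by
        rw [cycleGraph_adj']
        right
        omega
      have hadjG : (GG n).Adj x y := by
        rw [hx', hy']
        exact adj_G _ _ hadj
      refine ⟨Walk.cons hadjG Walk.nil, ?_, ?_⟩
      · rw [Walk.length_cons, Walk.length_nil,
          dist_eq_off hn x y 1 le_rfl (by omega) (by simpa using hxy)]
      · intro v hv _
        rw [Walk.support_cons] at hv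
        rcases List.mem_cons.mp hv with h | h
        · exact Or.inl h
        · simp at h
          exact Or.inr h
  · rw [hx', hy']
    exact visible_pair hn k hge h hxy

lemma lowerMV (hn : 7 ≤ n) : IsMVSet (GG n) {v : Fin n × Fin 2 | v.2 = 0} := by
  intro x hx y hy
  have hx0 : x.2 = 0 := hx
  have hy0 : y.2 = 0 := hy
  rcases le_or_gt (2 * (y.1 - x.1).val) n with h | h
  · exact key_vis hn x y hx0 hy0 h
  · apply visible_symm
    apply key_vis hn y x hy0 hx0
    have hne : x.1 ≠ y.1 := by
      intro hc
      rw [hc, sub_self] at h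
      have : (0 : Fin n).val = 0 := Fin.val_zero n
      omega
    have := sub_val_add hne
    omega

lemma row_card : ({v : Fin n × Fin 2 | v.2 = 0} : Set (Fin n × Fin 2)).ncard = n := by
  have himg : {v : Fin n × Fin 2 | v.2 = 0} = (fun a : Fin n => (a, (0 : Fin 2))) '' Set.univ := by
    ext ⟨a, i⟩
    simp [Prod.ext_iff, eq_comm]
  rw [himg, Set.ncard_image_of_injective _ (fun a b hab => (Prod.ext_iff.mp hab).1),
    Set.ncard_univ, Nat.card_eq_fintype_card, Fintype.card_fin]

def occ (X : Set (Fin n × Fin 2)) (a : Fin n) : Prop := (a, 0) ∈ X ∨ (a, 1) ∈ X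

def ful (X : Set (Fin n × Fin 2)) (a : Fin n) : Prop := (a, 0) ∈ X ∧ (a, 1) ∈ X

lemma blocked (hn : 7 ≤ n) {X : Set (Fin n × Fin 2)} (hX : IsMVSet (GG n) X)
    {b c mc : Fin n} {d t : ℕ} (h1 : 1 ≤ t) (ht : t < d) (hd : 2 * d < n)
    (hc_eq : c = b + (d : Fin n)) (hm_eq : mc = b + (t : Fin n))
    (hb : occ X b) (hc : occ X c) (hf : ful X mc) : False := by
  obtain ⟨i, hbi⟩ : ∃ i, (b, i) ∈ X := by rcases hb with h | h; exacts [⟨0, h⟩, ⟨1, h⟩]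
  obtain ⟨j, hcj⟩ : ∃ j, (c, j) ∈ X := by rcases hc with h | h; exacts [⟨0, h⟩, ⟨1, h⟩]
  obtain ⟨p, hlen, hsupp⟩ := hX _ hbi _ hcj
  have hdist : (GG n).dist ((b, i) : Fin n × Fin 2) ((c, j) : Fin n × Fin 2) = d :=
    dist_eq_off hn _ _ d (by omega) (by omega) (by simpa using hc_eq)
  have hlen' : p.length = d := by rw [hlen, hdist]
  have hcm : cm ((c, j) : Fin n × Fin 2).1 = cm ((b, i) : Fin n × Fin 2).1 + (d : ZMod n) := by
    simp only
    rw [hc_eq, cm_add, cm_natCast]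
  obtain ⟨v, hv, hvcm⟩ := walk_force d p hlen' hcm hd t (le_of_lt ht)
  have hv1 : v.1 = mc := by
    apply cm_inj
    rw [hvcm, hm_eq, cm_add, cm_natCast]
  have hvX : v ∈ X := by
    have hv2 : v = (v.1, v.2) := rfl
    have hvv := v.2.isLt
    rcases (by omega : v.2.val = 0 ∨ v.2.val = 1) with h0 | h0
    · have hz : v.2 = 0 := Fin.ext (by rw [h0]; rfl)
      rw [hv2, hv1, hz]
      exact hf.1
    · have hz : v.2 = 1 := Fin.ext (by rw [h0]; rfl)
      rw [hv2, hv1, hz]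
      exact hf.2
  have hfst : ((b, i) : Fin n × Fin 2).1 = b := rfl
  rw [hfst] at hvcm
  rcases hsupp v hv hvX with h | h
  · have e1 : cm v.1 = cm b := by rw [h, hfst]
    rw [hvcm] at e1
    have e2 : ((t : ℕ) : ZMod n) = ((0 : ℕ) : ZMod n) := by
      rw [Nat.cast_zero]
      linear_combination e1
    have := cast_nat_inj (show t < n by omega) (show 0 < n by omega) e2
    omega
  · have e1 : cm v.1 = cm c := by rw [h]
    rw [hvcm, hc_eq, cm_add, cm_natCast] at e1
    have e2 : ((t : ℕ) : ZMod n) = ((d : ℕ) : ZMod n) := by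
      linear_combination e1
    have := cast_nat_inj (show t < n by omega) (show d < n by omega) e2
    omega

lemma upperMV (hn : 7 ≤ n) {X : Set (Fin n × Fin 2)} (hX : IsMVSet (GG n) X) :
    X.ncard ≤ n := by
  classical
  have fact1 : ∀ a : Fin n, ful X a → occ X (a - 1) → occ X (a + 1) → False := by
    intro a hf h1 h2
    exact blocked hn hX (t := 1) (d := 2) le_rfl (by omega) (by omega)
      (show a + 1 = (a - 1) + ((2 : ℕ) : Fin n) by push_cast; ring)
      (show a = (a - 1) + ((1 : ℕ) : Fin n) by push_cast; ring)
      h1 h2 hf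
  have fact2 : ∀ a : Fin n, ful X a → occ X (a + 1) → occ X (a - 2) → False := by
    intro a hf h1 h2
    exact blocked hn hX (t := 2) (d := 3) (by omega) (by omega) (by omega)
      (show a + 1 = (a - 2) + ((3 : ℕ) : Fin n) by push_cast; ring)
      (show a = (a - 2) + ((2 : ℕ) : Fin n) by push_cast; ring)
      h2 h1 hf
  set φ : Fin n → Fin n := fun a => if occ X (a + 1) then a - 1 else a + 1 with hφ
  set F := Finset.univ.filter (fun a => ful X a) with hF
  set U := Finset.univ.filter (fun a => ¬ occ X a) with hU
  have hmemF : ∀ a, a ∈ F ↔ ful X a := by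
    intro a; rw [hF, Finset.mem_filter]; simp
  have hmaps : ∀ a ∈ F, φ a ∈ U := by
    intro a ha
    rw [hmemF] at ha
    rw [hU, Finset.mem_filter]
    refine ⟨Finset.mem_univ _, ?_⟩
    by_cases h : occ X (a + 1)
    · rw [hφ]; simp only [if_pos h]
      exact fun hc => fact1 a ha hc h
    · rw [hφ]; simp only [if_neg h]
      exact h
  have hinj : Set.InjOn φ ↑F := by
    intro a ha b hb heq
    rw [Finset.mem_coe, hmemF] at ha hb
    by_cases h1 : occ X (a + 1) <;> by_cases h2 : occ X (b + 1)
    · rw [hφ] at heq; simp only [if_pos h1, if_pos h2] at heq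
      exact sub_left_injective heq
    · rw [hφ] at heq; simp only [if_pos h1, if_neg h2] at heq
      exfalso
      apply fact2 a ha h1
      have hb2 : a - 2 = b := by
        rw [show a - 2 = a - 1 - 1 by ring, heq]; ring
      rw [hb2]
      exact Or.inl hb.1
    · rw [hφ] at heq; simp only [if_neg h1, if_pos h2] at heq
      exfalso
      apply fact2 b hb h2
      have hb2 : b - 2 = a := by
        rw [show b - 2 = b - 1 - 1 by ring, ← heq]; ring
      rw [hb2]
      exact Or.inl ha.1
    · rw [hφ] at heq; simp only [if_neg h1, if_neg h2] at heq
      exact add_right_cancel heq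
  have hFU : F.card ≤ U.card := Finset.card_le_card_of_injOn φ hmaps hinj
  have hOU : (Finset.univ.filter (fun a => occ X a)).card + U.card = n := by
    rw [hU, Finset.card_filter_add_card_filter_not, Finset.card_univ,
      Fintype.card_fin]
  have hcount : X.ncard = (Finset.univ.filter (fun a => occ X a)).card + F.card := by
    rw [Set.ncard_eq_toFinset_card']
    have h1 : X.toFinset = Finset.univ.filter (fun v => v ∈ X) := by
      ext v; simp
    rw [h1, Finset.card_filter, Fintype.sum_prod_type]
    have h2 : ∀ a : Fin n, (∑ i : Fin 2, if (a, i) ∈ X then 1 else 0) =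
        ((if occ X a then 1 else 0) + (if ful X a then 1 else 0) : ℕ) := by
      intro a
      rw [Fin.sum_univ_two]
      by_cases p : (a, 0) ∈ X <;> by_cases q : (a, 1) ∈ X <;>
        simp [occ, ful, p, q]
    rw [Finset.sum_congr rfl (fun a _ => h2 a), Finset.sum_add_distrib,
      ← Finset.card_filter, ← Finset.card_filter, hF]
  omega

end MVAux

theorem stmt_17 (n : ℕ) (hn : 7 ≤ n) :
    mu (strongProd (SimpleGraph.cycleGraph n) (SimpleGraph.pathGraph 2)) = n := by
  haveI : NeZero n := ⟨by omega⟩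
  have hmem : n ∈ {m | ∃ X : Set (Fin n × Fin 2), IsMVSet (MVAux.GG n) X ∧ X.ncard = m} :=
    ⟨{v | v.2 = 0}, MVAux.lowerMV hn, MVAux.row_card⟩
  have hub : ∀ m ∈ {m | ∃ X : Set (Fin n × Fin 2), IsMVSet (MVAux.GG n) X ∧ X.ncard = m},
      m ≤ n := by
    rintro m ⟨X, hX, rfl⟩
    exact MVAux.upperMV hn hX
  have hmu : mu (strongProd (SimpleGraph.cycleGraph n) (SimpleGraph.pathGraph 2)) =
      sSup {m | ∃ X : Set (Fin n × Fin 2), IsMVSet (MVAux.GG n) X ∧ X.ncard = m} := rfl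
  rw [hmu]
  exact le_antisymm (csSup_le ⟨n, hmem⟩ hub) (le_csSup ⟨n, fun m hm => hub m hm⟩ hmem)
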